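/- Let ℓ be a prime of the form ℓ = t^2 + 27 for some integer t. Then the point (ℓ, tℓ) lies on the elliptic curve E: y^2 = x^3 - 27 ℓ^2 and has infinite order; in particular the Mordell–Weil rank of E over Q is at least 1. -/

import Mathlib

open WeierstrassCurve

open WeierstrassCurve.Affine

noncomputable abbrev myW (k : ℚ) : WeierstrassCurve.Affine ℚ :=
  { a₁ := 0, a₂ := 0, a₃ := 0, a₄ := 0, a₆ := k }

lemma step {k : ℚ} (hk0 : k ≠ 0) (hk : padicValRat 2 k = 0)
    {x y : ℚ} (h : (myW k).Nonsingular x y) (hv : padicValRat 2 x ≤ -2) :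
    ∃ (x' y' : ℚ) (h' : (myW k).Nonsingular x' y'),
      Point.some (h := h) + Point.some (h := h) = Point.some (h := h') ∧
      padicValRat 2 x' = padicValRat 2 x - 2 := by
  have x0 : x ≠ 0 := by
    rintro rfl; rw [padicValRat.zero] at hv; norm_num at hv
  have hE : y ^ 2 = x ^ 3 + k := by
    have h1 := h.1
    rw [equation_iff] at h1
    simpa [myW] using h1
  set v : ℤ := padicValRat 2 x with hvdef
  have hx3 : (x ^ 3 : ℚ) ≠ 0 := pow_ne_zero _ x0
  have hvx3 : padicValRat 2 (x ^ 3) = 3 * v := by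
    rw [padicValRat.pow x]; push_cast; ring
  have hlt : padicValRat 2 (x ^ 3) < padicValRat 2 k := by
    rw [hvx3, hk]; omega
  have hsum0 : x ^ 3 + k ≠ 0 := by
    intro h0
    have : x ^ 3 = -k := by linarith
    rw [this, padicValRat.neg, hk] at hvx3; omega
  have y0 : y ≠ 0 := by
    intro h0; rw [h0] at hE; exact hsum0 (by linarith)
  have hvy2 : padicValRat 2 (y ^ 2) = 3 * v := by
    rw [hE, padicValRat.add_eq_of_lt hsum0 hx3 hk0 hlt, hvx3]
  have hvy : 2 * padicValRat 2 y = 3 * v := by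
    rw [← hvy2, padicValRat.pow y]; push_cast; ring
  have hy' : y ≠ (myW k).negY x y := by
    simp only [negY, myW]
    intro hh
    apply y0
    have : 2 * y = 0 := by linarith
    linarith
  refine ⟨_, _, nonsingular_add h h fun hxy => hy' hxy.2, Point.add_self_of_Y_ne hy', ?_⟩
  set L : ℚ := (myW k).slope x x y y with hLdef
  have hL : L = 3 * x ^ 2 / (2 * y) := by
    rw [hLdef, slope_of_Y_ne rfl hy']
    simp only [negY, myW]
    ring_nf
  have hL0 : L ≠ 0 := by
    rw [hL]
    exact div_ne_zero (by positivity) (by simpa using y0)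
  have hvL : padicValRat 2 L = 2 * v - 1 - padicValRat 2 y := by
    rw [hL, padicValRat.div (by positivity) (by simpa using y0),
      padicValRat.mul (by norm_num) (pow_ne_zero _ x0),
      padicValRat.mul (by norm_num) y0, padicValRat.pow x]
    have h3 : padicValRat 2 (3 : ℚ) = 0 := by
      have : ((3 : ℤ) : ℚ) = (3 : ℚ) := by norm_num
      rw [← this, padicValRat.of_int]
      norm_num [padicValInt.eq_zero_of_not_dvd]
    have h2 : padicValRat 2 (2 : ℚ) = 1 := by
      simpa using padicValRat.self (p := 2) (by norm_num)
    rw [h3, h2]; push_cast; ring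
  have haX : (myW k).addX x x L = L ^ 2 - 2 * x := by
    simp only [addX, myW]; ring
  have hvL2 : padicValRat 2 (L ^ 2) = v - 2 := by
    rw [padicValRat.pow L, hvL]; push_cast; omega
  have h2x0 : -(2 * x) ≠ 0 := by simpa using x0
  have hv2x : padicValRat 2 (-(2 * x)) = 1 + v := by
    rw [padicValRat.neg, padicValRat.mul (by norm_num) x0]
    have h2 : padicValRat 2 (2 : ℚ) = 1 := by
      simpa using padicValRat.self (p := 2) (by norm_num)
    rw [h2]
  have hlt2 : padicValRat 2 (L ^ 2) < padicValRat 2 (-(2 * x)) := by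
    rw [hvL2, hv2x]; omega
  have hne0 : L ^ 2 + -(2 * x) ≠ 0 := by
    intro h0
    have : L ^ 2 = -(-(2 * x)) := by linarith
    rw [this, padicValRat.neg, hv2x] at hvL2; omega
  rw [haX, sub_eq_add_neg,
    padicValRat.add_eq_of_lt hne0 (pow_ne_zero _ hL0) h2x0 hlt2, hvL2]


set_option maxHeartbeats 1000000 in
/-- For a prime `ℓ = t² + 27` the point `(ℓ, tℓ)` on `E : y² = x³ - 27ℓ²` has infinite
order; in particular the Mordell–Weil rank of `E` over `ℚ` is at least 1. -/
theorem stmt14 (ℓ : ℕ) (hℓ : ℓ.Prime) (t : ℤ) (ht : (ℓ : ℤ) = t ^ 2 + 27)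
    (W : WeierstrassCurve.Affine ℚ)
    (hW : W = { a₁ := 0, a₂ := 0, a₃ := 0, a₄ := 0, a₆ := -27 * (ℓ : ℚ) ^ 2 }) :
    (∃ h : WeierstrassCurve.Affine.Nonsingular W (ℓ : ℚ) ((t : ℚ) * (ℓ : ℚ)),
        addOrderOf (WeierstrassCurve.Affine.Point.some (h := h)) = 0) ∧
      ∃ f : ℤ →+ WeierstrassCurve.Affine.Point W, Function.Injective f := by
  subst hW
  obtain ⟨c, hcdef⟩ : ∃ c : ℚ, c = -27 * (ℓ : ℚ) ^ 2 := ⟨_, rfl⟩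
  rw [← hcdef]
  show (∃ h : (myW c).Nonsingular (ℓ : ℚ) ((t : ℚ) * (ℓ : ℚ)),
        addOrderOf (WeierstrassCurve.Affine.Point.some (h := h)) = 0) ∧
      ∃ f : ℤ →+ (myW c).Point, Function.Injective f
  -- basic arithmetic facts
  have hl27 : (27 : ℤ) ≤ (ℓ : ℤ) := by nlinarith [sq_nonneg t]
  have hl27' : 27 ≤ ℓ := by exact_mod_cast hl27
  have hlodd : Odd ℓ := hℓ.odd_of_ne_two (by omega)
  have hloddZ : Odd ((ℓ : ℤ)) := Int.odd_coe_nat ℓ |>.mpr hlodd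
  have hteven : Even t := by
    by_contra hodd
    rw [Int.not_even_iff_odd] at hodd
    have h1 : Even ((ℓ : ℤ)) := by
      rw [ht]; exact (hodd.pow).add_odd ⟨13, by ring⟩
    rw [Int.even_coe_nat] at h1
    exact (Nat.not_even_iff_odd.mpr hlodd) h1
  have ht0 : t ≠ 0 := by
    intro h0
    rw [h0] at ht
    norm_num at ht
    have : ℓ = 27 := by exact_mod_cast ht
    rw [this] at hℓ; norm_num at hℓ
  have hl0 : (ℓ : ℚ) ≠ 0 := Nat.cast_ne_zero.mpr hℓ.ne_zero
  have ht0' : (t : ℚ) ≠ 0 := Int.cast_ne_zero.mpr ht0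
  have htQ : (ℓ : ℚ) = (t : ℚ) ^ 2 + 27 := by exact_mod_cast ht
  have hc0 : c ≠ 0 := by
    rw [hcdef]; intro h; apply hl0; nlinarith [sq_nonneg ((ℓ:ℚ))]
  have hval2 : padicValRat 2 (2 : ℚ) = 1 := by
    simpa using padicValRat.self (p := 2) (by norm_num)
  have hcval : padicValRat 2 c = 0 := by
    have h1 : c = ((-27 * (ℓ : ℤ) ^ 2 : ℤ) : ℚ) := by rw [hcdef]; push_cast; ring
    rw [h1, padicValRat.of_int, padicValInt.eq_zero_of_not_dvd]
    · norm_num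
    · intro hdvd
      obtain ⟨j, hj⟩ := hdvd
      have hEv : Even (-27 * (ℓ : ℤ) ^ 2) := ⟨j, by omega⟩
      have h27 : Odd (-27 : ℤ) := ⟨-14, by ring⟩
      have hO : Odd (-27 * (ℓ : ℤ) ^ 2) := h27.mul hloddZ.pow
      exact (Int.not_odd_iff_even.mpr hEv) hO
  -- the base point
  have hEqP : (myW c).Equation (ℓ : ℚ) ((t : ℚ) * (ℓ : ℚ)) := by
    rw [equation_iff]
    simp only [myW]
    linear_combination (-(ℓ : ℚ) ^ 2) * htQ - hcdef
  have hns : (myW c).Nonsingular (ℓ : ℚ) ((t : ℚ) * (ℓ : ℚ)) := by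
    rw [nonsingular_iff]
    refine ⟨hEqP, Or.inr ?_⟩
    simp only [myW]
    intro hh
    have h2 : (2 : ℚ) * ((t : ℚ) * (ℓ : ℚ)) = 0 := by linarith
    have := mul_ne_zero ht0' hl0
    simp [this] at h2
  have hy'P : (t : ℚ) * (ℓ : ℚ) ≠ (myW c).negY (ℓ : ℚ) ((t : ℚ) * (ℓ : ℚ)) := by
    simp only [negY, myW]
    intro hh
    have h2 : (2 : ℚ) * ((t : ℚ) * (ℓ : ℚ)) = 0 := by linarith
    have := mul_ne_zero ht0' hl0
    simp [this] at h2
  obtain ⟨x₁, y₁, h1, h2P, hx₁⟩ :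
      ∃ (x₁ y₁ : ℚ) (h' : (myW c).Nonsingular x₁ y₁),
        (Point.some (h := hns) + Point.some (h := hns) = Point.some (h := h')) ∧
          x₁ = (ℓ : ℚ) * ((t : ℚ) ^ 2 + 243) / (4 * (t : ℚ) ^ 2) := by
    refine ⟨_, _, nonsingular_add hns hns fun hxy => hy'P hxy.2, Point.add_self_of_Y_ne hy'P, ?_⟩
    have hL : (myW c).slope (ℓ : ℚ) (ℓ : ℚ) ((t : ℚ) * (ℓ : ℚ)) ((t : ℚ) * (ℓ : ℚ)) =
        3 * (ℓ : ℚ) ^ 2 / (2 * ((t : ℚ) * (ℓ : ℚ))) := by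
      rw [slope_of_Y_ne rfl hy'P]
      simp only [negY, myW]
      ring_nf
    rw [hL]
    simp only [addX, myW]
    rw [htQ]
    have hne : (t : ℚ) ^ 2 + 27 ≠ 0 := by positivity
    field_simp
    ring
  have hvx₁ : padicValRat 2 x₁ ≤ -2 := by
    have hnumodd : Odd ((ℓ : ℤ) * (t ^ 2 + 243)) :=
      hloddZ.mul ((hteven.pow_of_ne_zero (by norm_num)).add_odd ⟨121, by ring⟩)
    have hnum0 : ((ℓ : ℚ) * ((t : ℚ) ^ 2 + 243)) ≠ 0 := by
      intro h0
      have : ((ℓ : ℤ) * (t ^ 2 + 243) : ℤ) = 0 := by exact_mod_cast (by push_cast at h0 ⊢; linarith : (((ℓ : ℤ) * (t ^ 2 + 243) : ℤ) : ℚ) = 0)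
      simp [this] at hnumodd
    have hnumval : padicValRat 2 ((ℓ : ℚ) * ((t : ℚ) ^ 2 + 243)) = 0 := by
      have hcast : ((ℓ : ℚ) * ((t : ℚ) ^ 2 + 243)) = (((ℓ : ℤ) * (t ^ 2 + 243) : ℤ) : ℚ) := by push_cast; ring
      rw [hcast, padicValRat.of_int, padicValInt.eq_zero_of_not_dvd]
      · norm_num
      · intro hdvd
        obtain ⟨j, hj⟩ := hdvd
        exact (Int.not_odd_iff_even.mpr ⟨j, by omega⟩) hnumodd
    obtain ⟨u, hu⟩ := hteven
    have hu0 : (u : ℚ) ≠ 0 := by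
      intro h0
      have h1 : u = 0 := by exact_mod_cast h0
      apply ht0
      rw [hu, h1]; ring
    have htval : 1 ≤ padicValRat 2 ((t : ℚ)) := by
      have hcast : (t : ℚ) = 2 * (u : ℚ) := by rw [hu]; push_cast; ring
      rw [hcast, padicValRat.mul (by norm_num) hu0, hval2]
      have : padicValRat 2 ((u : ℚ)) = (padicValInt 2 u : ℤ) := padicValRat.of_int
      omega
    have hdenval : padicValRat 2 (4 * (t : ℚ) ^ 2) = 2 + 2 * padicValRat 2 ((t : ℚ)) := by
      rw [padicValRat.mul (by norm_num) (pow_ne_zero _ ht0'), padicValRat.pow (t : ℚ)]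
      have h4 : padicValRat 2 (4 : ℚ) = 2 := by
        have : (4 : ℚ) = 2 ^ 2 := by norm_num
        rw [this, padicValRat.pow (2 : ℚ), hval2]; norm_num
      rw [h4]; push_cast; ring
    rw [hx₁, padicValRat.div hnum0 (by positivity), hnumval, hdenval]
    omega
  -- iterated doubling
  have key : ∀ n : ℕ, ∃ (xn yn : ℚ) (h' : (myW c).Nonsingular xn yn),
      (2 ^ n) • (Point.some (h := h1)) = Point.some (h := h') ∧
        padicValRat 2 xn = padicValRat 2 x₁ - 2 * n := by
    intro n
    induction n with
    | zero => exact ⟨_, _, h1, by rw [pow_zero, one_nsmul], by simp⟩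
    | succ n ih =>
      obtain ⟨xn, yn, h', hpt, hvaln⟩ := ih
      have hvle : padicValRat 2 xn ≤ -2 := by
        rw [hvaln]; have : (0:ℤ) ≤ (n:ℤ) := Int.natCast_nonneg n; omega
      obtain ⟨x', y', h'', hadd, hval'⟩ := step hc0 hcval h' hvle
      refine ⟨x', y', h'', ?_, by rw [hval', hvaln]; push_cast; ring⟩
      rw [pow_succ, mul_nsmul, hpt, two_nsmul, hadd]
  -- 2P has infinite order
  have hQfin : ¬ IsOfFinAddOrder (Point.some (h := h1)) := by
    intro hfin
    have hm : 0 < addOrderOf (Point.some (h := h1)) := hfin.addOrderOf_pos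
    haveI : NeZero (addOrderOf (Point.some (h := h1))) := ⟨hm.ne'⟩
    obtain ⟨a, b, hab, hfab⟩ := Finite.exists_ne_map_eq_of_infinite
      (fun n : ℕ => ((2 ^ n : ℕ) : ZMod (addOrderOf (Point.some (h := h1)))))
    have hmod : (2 ^ a) ≡ (2 ^ b) [MOD addOrderOf (Point.some (h := h1))] :=
      (ZMod.natCast_eq_natCast_iff _ _ _).1 hfab
    have heq : (2 ^ a) • Point.some (h := h1) = (2 ^ b) • Point.some (h := h1) :=
      nsmul_eq_nsmul_iff_modEq.mpr hmod
    obtain ⟨xa, ya, ha', hpta, hvala⟩ := key a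
    obtain ⟨xb, yb, hb', hptb, hvalb⟩ := key b
    rw [hpta, hptb] at heq
    have hxx : xa = xb := by
      simp only [Point.some.injEq] at heq
      exact heq.1
    rw [hxx, hvalb] at hvala
    have : (a : ℤ) = (b : ℤ) := by omega
    exact hab (by exact_mod_cast this)
  have hPfin : ¬ IsOfFinAddOrder (Point.some (h := hns)) := by
    intro hf
    apply hQfin
    have := hf.nsmul (n := 2)
    rwa [two_nsmul, h2P] at this
  refine ⟨⟨hns, addOrderOf_eq_zero_iff.mpr hPfin⟩,
    ⟨zmultiplesHom _ (Point.some (h := hns)), ?_⟩⟩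
  intro a b hab
  by_contra hne
  apply hPfin
  rw [isOfFinAddOrder_iff_zsmul_eq_zero]
  refine ⟨a - b, sub_ne_zero.mpr hne, ?_⟩
  simp only [zmultiplesHom_apply] at hab
  rw [sub_zsmul, hab]; abel
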